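/- Let F denote the set of functions f : ℕ → ℤ such that 2ⁿ ∣ (Δⁿf)(x) for all n ≥ 0 and all x ≥ 0, and let b, g, h ∈ F. Define r(x) = b(x) · ⟨g, h⟩(x) (which lies in F). Then for every m ≥ 0, ε_m^r ≡ Σ_{i+j+k=m} (m!/(i!j!k!)) · ε_k^b · (ε_i^g ε_j^h + ε_{i+1}^g ε_j^h + ε_i^g ε_{j+1}^h) (mod 2), where the sum is over all triples of nonnegative integers i, j, k with i + j + k = m. -/

import Mathlib

/-- The finite difference operator: `(Δ f)(x) = f(x+1) - f(x)`. -/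
def delta (f : ℕ → ℤ) : ℕ → ℤ := fun x => f (x + 1) - f x

/-- Membership in the set `F` of functions `f : ℕ → ℤ` with `2^n ∣ (Δ^n f)(x)`
for all `n` and `x`. -/
def memF (f : ℕ → ℤ) : Prop := ∀ (n : ℕ) (x : ℕ), (2 : ℤ) ^ n ∣ (delta^[n] f) x

/-- For `f ∈ F`, `eps f n` is the element of `{0, 1}` with
`(Δ^n f)(x) ≡ eps f n · 2^n (mod 2^(n+1))` for all `x` (the value is independent
of `x`; we read it off at `x = 0`). -/
def eps (f : ℕ → ℤ) (n : ℕ) : ℤ := ((delta^[n] f) 0 / 2 ^ n) % 2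

lemma delta_iter_succ (f : ℕ → ℤ) (m x : ℕ) :
    delta^[m+1] f x = delta^[m] f (x+1) - delta^[m] f x := by
  rw [Function.iterate_succ_apply']; rfl

lemma delta_iter_add (f g : ℕ → ℤ) (m : ℕ) (x : ℕ) :
    delta^[m] (fun y => f y + g y) x = delta^[m] f x + delta^[m] g x := by
  induction m generalizing x with
  | zero => rfl
  | succ m ih => rw [delta_iter_succ, delta_iter_succ, delta_iter_succ, ih, ih]; ring

lemma delta_iter_two_mul (p q : ℕ → ℤ) (hpq : ∀ x, 2 * p x = q x) (m : ℕ) (x : ℕ) :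
    2 * delta^[m] p x = delta^[m] q x := by
  induction m generalizing x with
  | zero => exact hpq x
  | succ m ih => rw [delta_iter_succ, delta_iter_succ, mul_sub, ih, ih]

lemma delta_iter_shift (f : ℕ → ℤ) (m : ℕ) (x : ℕ) :
    delta^[m] (fun y => f (y+1)) x = delta^[m] f (x+1) := by
  induction m generalizing x with
  | zero => rfl
  | succ m ih => rw [delta_iter_succ, delta_iter_succ, ih, ih]

lemma leibniz (u v : ℕ → ℤ) (m : ℕ) (x : ℕ) :
    delta^[m] (fun y => u y * v y) x
      = ∑ i ∈ Finset.range (m+1),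
          (m.choose i : ℤ) * delta^[i] u (x + (m - i)) * delta^[m - i] v x := by
  induction m generalizing x with
  | zero => simp
  | succ m ih =>
    rw [delta_iter_succ, ih, ih, ← Finset.sum_sub_distrib]
    have key : ∀ i ∈ Finset.range (m+1),
        (m.choose i : ℤ) * delta^[i] u (x + 1 + (m - i)) * delta^[m - i] v (x+1)
          - (m.choose i : ℤ) * delta^[i] u (x + (m - i)) * delta^[m - i] v x
        = ((m.choose i : ℤ) * delta^[i] u (x + (m + 1 - i)) * delta^[m + 1 - i] v x)
          + ((m.choose i : ℤ) * delta^[i+1] u (x + (m - i)) * delta^[m - i] v x) := by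
      intro i hi
      rw [Finset.mem_range] at hi
      have e1 : x + (m + 1 - i) = x + 1 + (m - i) := by omega
      have e2 : m + 1 - i = m - i + 1 := by omega
      rw [e1, e2, delta_iter_succ v (m-i) x, delta_iter_succ u i (x+(m-i))]
      have e3 : x + (m - i) + 1 = x + 1 + (m - i) := by omega
      rw [e3]; ring
    rw [Finset.sum_congr rfl key, Finset.sum_add_distrib]
    have key2 : ∀ (t : ℕ → ℤ), ∑ i ∈ Finset.range (m+2), ((m+1).choose i : ℤ) * t i
        = ∑ i ∈ Finset.range (m+1), (m.choose i : ℤ) * t i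
          + ∑ i ∈ Finset.range (m+1), (m.choose i : ℤ) * t (i+1) := by
      intro t
      rw [Finset.sum_range_succ' (fun i => ((m+1).choose i : ℤ) * t i) (m+1)]
      simp only [Nat.choose_succ_succ, Nat.cast_add, add_mul, Finset.sum_add_distrib,
        Nat.choose_zero_right, Nat.cast_one, one_mul]
      have h0 : (∑ i ∈ Finset.range (m+1), (m.choose (i+1) : ℤ) * t (i+1)) + t 0
          = ∑ i ∈ Finset.range (m+1), (m.choose i : ℤ) * t i := by
        have := Finset.sum_range_succ' (fun i => (m.choose i : ℤ) * t i) m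
        rw [Finset.sum_range_succ, Nat.choose_succ_self, Nat.cast_zero, zero_mul, add_zero,
          Finset.sum_range_succ' (fun i => (m.choose i : ℤ) * t i) m]
        simp
      linarith [h0]
    simp only [mul_assoc]
    have h3 : ∑ i ∈ Finset.range (m+1), (m.choose i : ℤ) * (delta^[i+1] u (x + (m - i)) * delta^[m - i] v x)
        = ∑ i ∈ Finset.range (m+1), (m.choose i : ℤ) * (delta^[i+1] u (x + (m + 1 - (i+1))) * delta^[m + 1 - (i+1)] v x) := by
      simp only [Nat.succ_sub_succ]
    rw [h3]
    exact (key2 (fun i => delta^[i] u (x + (m + 1 - i)) * delta^[m + 1 - i] v x)).symm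

lemma modeq_sum {ι : Type*} (s : Finset ι) (f g : ι → ℤ) (n : ℤ)
    (h : ∀ i ∈ s, f i ≡ g i [ZMOD n]) :
    (∑ i ∈ s, f i) ≡ (∑ i ∈ s, g i) [ZMOD n] := by
  rw [Int.modEq_iff_dvd, ← Finset.sum_sub_distrib]
  exact Finset.dvd_sum fun i hi => Int.modEq_iff_dvd.mp (h i hi)

lemma delta_iter_const (f : ℕ → ℤ) (hf : memF f) (n x : ℕ) :
    delta^[n] f x ≡ delta^[n] f 0 [ZMOD 2^(n+1)] := by
  induction x with
  | zero => rfl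
  | succ x ih =>
    have hd : (2:ℤ)^(n+1) ∣ delta^[n] f (x+1) - delta^[n] f x := by
      rw [← delta_iter_succ f n x]; exact hf (n+1) x
    exact (Int.modEq_iff_dvd.mpr hd).symm.trans ih

lemma eps_spec (f : ℕ → ℤ) (hf : memF f) (n x : ℕ) :
    delta^[n] f x ≡ eps f n * 2^n [ZMOD 2^(n+1)] := by
  obtain ⟨c, hc⟩ := hf n 0
  have he : eps f n = c % 2 := by
    rw [eps, hc, Int.mul_ediv_cancel_left _ (by positivity)]
  refine (delta_iter_const f hf n x).trans ?_
  rw [hc, he]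
  have h2 : c ≡ c % 2 [ZMOD 2] := (Int.emod_emod_of_dvd c (dvd_refl 2)).symm
  have := h2.mul_right' (c := 2^n)
  have hpow : (2:ℤ) * 2^n = 2^(n+1) := by ring
  rw [hpow] at this
  calc (2:ℤ)^n * c = c * 2^n := by ring
    _ ≡ c % 2 * 2^n [ZMOD 2^(n+1)] := this

lemma modeq_mul_pow {i j : ℕ} {a α c β : ℤ} (ha : a ≡ α [ZMOD 2^(i+1)]) (hα : (2:ℤ)^i ∣ α)
    (hc : c ≡ β [ZMOD 2^(j+1)]) (hβ : (2:ℤ)^j ∣ β) :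
    a * c ≡ α * β [ZMOD 2^(i+j+1)] := by
  rw [Int.modEq_iff_dvd] at ha hc ⊢
  have hc2 : (2:ℤ)^j ∣ c := by
    have hc' : c = β - (β - c) := by ring
    rw [hc']
    exact dvd_sub hβ (dvd_trans (pow_dvd_pow 2 (Nat.le_succ j)) hc)
  have key : α*β - a*c = (α - a)*c + α*(β - c) := by ring
  rw [key]
  refine dvd_add ?_ ?_
  · have hp : (2:ℤ)^(i+j+1) = 2^(i+1) * 2^j := by ring
    rw [hp]; exact mul_dvd_mul ha hc2
  · have hp : (2:ℤ)^(i+j+1) = 2^i * 2^(j+1) := by ring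
    rw [hp]; exact mul_dvd_mul hα hc

lemma pair_cong (g h : ℕ → ℤ) (hg : memF g) (hh : memF h) (i j x₁ x₂ : ℕ) :
    delta^[i] g (x₁+1) * delta^[j] h x₂ + delta^[i] g x₁ * delta^[j] h (x₂+1)
      ≡ 2^(i+j+1) * (eps g i * eps h j + eps g (i+1) * eps h j + eps g i * eps h (j+1))
      [ZMOD 2^(i+j+2)] := by
  have hA : delta^[i] g (x₁+1) = delta^[i] g x₁ + delta^[i+1] g x₁ := by
    rw [delta_iter_succ]; ring
  have hB : delta^[j] h (x₂+1) = delta^[j] h x₂ + delta^[j+1] h x₂ := by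
    rw [delta_iter_succ]; ring
  rw [hA, hB]
  have e : (delta^[i] g x₁ + delta^[i+1] g x₁) * delta^[j] h x₂
      + delta^[i] g x₁ * (delta^[j] h x₂ + delta^[j+1] h x₂)
      = 2*(delta^[i] g x₁ * delta^[j] h x₂) + delta^[i+1] g x₁ * delta^[j] h x₂
        + delta^[i] g x₁ * delta^[j+1] h x₂ := by ring
  rw [e]
  have P1 := modeq_mul_pow (i:=i) (j:=j) (eps_spec g hg i x₁) (dvd_mul_left _ _)
    (eps_spec h hh j x₂) (dvd_mul_left _ _)
  have P1' := P1.mul_left' (c := 2)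
  have P2 := modeq_mul_pow (i:=i+1) (j:=j) (eps_spec g hg (i+1) x₁) (dvd_mul_left _ _)
    (eps_spec h hh j x₂) (dvd_mul_left _ _)
  have P3 := modeq_mul_pow (i:=i) (j:=j+1) (eps_spec g hg i x₁) (dvd_mul_left _ _)
    (eps_spec h hh (j+1) x₂) (dvd_mul_left _ _)
  have m1 : (2:ℤ) * 2^(i+j+1) = 2^(i+j+2) := by ring
  have m2 : (i+1)+j+1 = i+j+2 := by omega
  have m3 : i+(j+1)+1 = i+j+2 := by omega
  rw [m1] at P1'; rw [m2] at P2; rw [m3] at P3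
  have hsum := (P1'.add P2).add P3
  have ef : 2*((eps g i * 2^i)*(eps h j * 2^j)) + (eps g (i+1) * 2^(i+1))*(eps h j * 2^j)
      + (eps g i * 2^i)*(eps h (j+1) * 2^(j+1))
      = 2^(i+j+1) * (eps g i * eps h j + eps g (i+1) * eps h j + eps g i * eps h (j+1)) := by
    ring
  exact ef ▸ hsum

noncomputable def Sgh (g h : ℕ → ℤ) (k : ℕ) : ℤ :=
  ∑ i ∈ Finset.range (k+1), (k.choose i : ℤ) *
    (eps g i * eps h (k-i) + eps g (i+1) * eps h (k-i) + eps g i * eps h (k-i+1))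

lemma q_cong (g h : ℕ → ℤ) (hg : memF g) (hh : memF h) (k x : ℕ) :
    delta^[k] (fun y => g (y+1) * h y + g y * h (y+1)) x
      ≡ 2^(k+1) * Sgh g h k [ZMOD 2^(k+2)] := by
  have L1 : delta^[k] (fun y => g (y+1) * h y) x
      = ∑ i ∈ Finset.range (k+1),
          (k.choose i : ℤ) * delta^[i] g (x + (k - i) + 1) * delta^[k - i] h x := by
    refine (leibniz (fun y => g (y+1)) h k x).trans (Finset.sum_congr rfl fun i _ => ?_)
    rw [delta_iter_shift]
  have L2 : delta^[k] (fun y => g y * h (y+1)) x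
      = ∑ i ∈ Finset.range (k+1),
          (k.choose i : ℤ) * delta^[i] g (x + (k - i)) * delta^[k - i] h (x+1) := by
    refine (leibniz g (fun y => h (y+1)) k x).trans (Finset.sum_congr rfl fun i _ => ?_)
    rw [delta_iter_shift]
  rw [delta_iter_add, L1, L2, ← Finset.sum_add_distrib, Sgh, Finset.mul_sum]
  refine modeq_sum _ _ _ _ fun i hi => ?_
  rw [Finset.mem_range] at hi
  have hij : i + (k - i) = k := by omega
  have hpair := (pair_cong g h hg hh i (k-i) (x + (k-i)) x).mul_left (k.choose i : ℤ)
  rw [hij] at hpair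
  have e1 : (k.choose i : ℤ) * delta^[i] g (x + (k - i) + 1) * delta^[k - i] h x
      + (k.choose i : ℤ) * delta^[i] g (x + (k - i)) * delta^[k - i] h (x+1)
      = (k.choose i : ℤ) * (delta^[i] g (x + (k - i) + 1) * delta^[k - i] h x
        + delta^[i] g (x + (k - i)) * delta^[k - i] h (x+1)) := by ring
  have e2 : 2^(k+1) * ((k.choose i : ℤ) *
      (eps g i * eps h (k-i) + eps g (i+1) * eps h (k-i) + eps g i * eps h (k-i+1)))
      = (k.choose i : ℤ) * (2^(k+1) *
      (eps g i * eps h (k-i) + eps g (i+1) * eps h (k-i) + eps g i * eps h (k-i+1))) := by ring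
  rw [e1, e2]
  exact hpair

lemma p_cong (g h : ℕ → ℤ) (hg : memF g) (hh : memF h) (P : ℕ → ℤ)
    (hP : ∀ x, 2 * P x = g (x+1) * h x + g x * h (x+1)) (k x : ℕ) :
    delta^[k] P x ≡ 2^k * Sgh g h k [ZMOD 2^(k+1)] := by
  have h2 : 2 * delta^[k] P x = delta^[k] (fun y => g (y+1) * h y + g y * h (y+1)) x :=
    delta_iter_two_mul P _ hP k x
  obtain ⟨t, ht⟩ := Int.modEq_iff_dvd.mp (q_cong g h hg hh k x)
  refine Int.modEq_iff_dvd.mpr ⟨t, ?_⟩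
  have hkey : (2:ℤ) * (2^k * Sgh g h k - delta^[k] P x) = 2 * (2^(k+1) * t) := by
    linear_combination ht - h2
  exact mul_left_cancel₀ (by norm_num : (2:ℤ) ≠ 0) hkey

lemma memF_P (g h : ℕ → ℤ) (hg : memF g) (hh : memF h) (P : ℕ → ℤ)
    (hP : ∀ x, 2 * P x = g (x+1) * h x + g x * h (x+1)) : memF P := by
  intro k x
  obtain ⟨u, hu⟩ := Int.modEq_iff_dvd.mp (p_cong g h hg hh P hP k x)
  exact ⟨Sgh g h k - 2*u, by linear_combination -hu⟩

lemma r_cong (b g h P : ℕ → ℤ) (hb : memF b) (hg : memF g) (hh : memF h)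
    (hP : ∀ x, 2 * P x = g (x+1) * h x + g x * h (x+1))
    (r : ℕ → ℤ) (hr : ∀ x, r x = b x * P x) (m : ℕ) :
    delta^[m] r 0 ≡
      2^m * (∑ i ∈ Finset.range (m+1), (m.choose i : ℤ) * eps b i * Sgh g h (m-i))
      [ZMOD 2^(m+1)] := by
  have hrfun : r = fun y => b y * P y := funext hr
  rw [hrfun, leibniz b P m 0, Finset.mul_sum]
  refine modeq_sum _ _ _ _ fun i hi => ?_
  rw [Finset.mem_range] at hi
  have hij : i + (m - i) = m := by omega
  have hprod := modeq_mul_pow (i := i) (j := m - i)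
    (eps_spec b hb i (0 + (m - i))) (dvd_mul_left _ _)
    (p_cong g h hg hh P hP (m-i) 0) (dvd_mul_right _ _)
  rw [hij] at hprod
  have := hprod.mul_left ((m.choose i : ℤ))
  have e1 : (m.choose i : ℤ) * (delta^[i] b (0 + (m - i)) * delta^[m - i] P 0)
      = (m.choose i : ℤ) * delta^[i] b (0 + (m - i)) * delta^[m - i] P 0 := by ring
  have e2 : (m.choose i : ℤ) * (eps b i * 2^i * (2^(m-i) * Sgh g h (m-i)))
      = 2^m * ((m.choose i : ℤ) * eps b i * Sgh g h (m-i)) := by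
    have hp : (2:ℤ)^i * 2^(m-i) = 2^m := by rw [← pow_add, hij]
    rw [← hp]; ring
  rw [e1, e2] at this
  exact this

lemma multinomial_three (a : Fin 3 → ℕ) :
    Nat.multinomial Finset.univ a = (a 2 + (a 0 + a 1)).choose (a 2) * (a 0 + a 1).choose (a 0) := by
  have huniv : (Finset.univ : Finset (Fin 3)) = insert 2 (insert 0 {1}) := by decide
  rw [huniv, Nat.multinomial_insert (by decide), Nat.multinomial_insert (by decide),
    Nat.multinomial_singleton, Finset.sum_insert (by decide), Finset.sum_singleton, mul_one]

set_option linter.unnecessarySeqFocus false in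
lemma sum_identity (b g h : ℕ → ℤ) (m : ℕ) :
    ∑ i ∈ Finset.range (m+1), (m.choose i : ℤ) * eps b i * Sgh g h (m-i)
      = ∑ a ∈ Finset.Nat.antidiagonalTuple 3 m,
        (Nat.multinomial Finset.univ a : ℤ) * eps b (a 2) *
          (eps g (a 0) * eps h (a 1) + eps g (a 0 + 1) * eps h (a 1) +
            eps g (a 0) * eps h (a 1 + 1)) := by
  simp only [Sgh, Finset.mul_sum]
  rw [Finset.sum_sigma' (Finset.range (m+1)) (fun i => Finset.range (m - i + 1))]
  refine Finset.sum_nbij' (fun p => ![p.2, m - p.1 - p.2, p.1]) (fun a => ⟨a 2, a 0⟩)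
    ?_ ?_ ?_ ?_ ?_
  · intro p hp
    rw [Finset.mem_sigma, Finset.mem_range, Finset.mem_range] at hp
    rw [Finset.Nat.mem_antidiagonalTuple, Fin.sum_univ_three]
    simp only [Matrix.cons_val_zero, Matrix.cons_val_one, Matrix.head_cons,
      Matrix.cons_val_two, Matrix.tail_cons]
    omega
  · intro a ha
    rw [Finset.Nat.mem_antidiagonalTuple, Fin.sum_univ_three] at ha
    simp only [Finset.mem_sigma, Finset.mem_range]
    omega
  · intro p hp
    rw [Finset.mem_sigma, Finset.mem_range, Finset.mem_range] at hp
    simp only [Matrix.cons_val_zero, Matrix.cons_val_two, Matrix.tail_cons, Matrix.head_cons]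
  · intro a ha
    rw [Finset.Nat.mem_antidiagonalTuple, Fin.sum_univ_three] at ha
    funext x
    fin_cases x <;> simp <;> omega
  · intro p hp
    rw [Finset.mem_sigma, Finset.mem_range, Finset.mem_range] at hp
    simp only [Matrix.cons_val_zero, Matrix.cons_val_one, Matrix.head_cons,
      Matrix.cons_val_two, Matrix.tail_cons]
    rw [multinomial_three]
    simp only [Matrix.cons_val_zero, Matrix.cons_val_one, Matrix.head_cons,
      Matrix.cons_val_two, Matrix.tail_cons]
    have e1 : p.2 + (m - p.1 - p.2) = m - p.1 := by omega
    have e2 : p.1 + (p.2 + (m - p.1 - p.2)) = m := by omega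
    rw [e1] at e2 ⊢
    rw [e2]
    have e3 : m - p.1 - p.2 = m - p.1 - p.2 := rfl
    push_cast
    ring

/-- The recursion for `ε_m` of `r(x) = b(x) · ⟨g, h⟩(x)`:
`ε_m^r ≡ ∑_{i+j+k=m} multinomial(m; i,j,k) · ε_k^b ·
  (ε_i^g ε_j^h + ε_{i+1}^g ε_j^h + ε_i^g ε_{j+1}^h) (mod 2)`. -/
theorem epsilon_recursion
    (b g h : ℕ → ℤ) (hb : memF b) (hg : memF g) (hh : memF h)
    (r : ℕ → ℤ)
    (hr : ∀ x : ℕ, r x = b x * ((g (x + 1) * h x + g x * h (x + 1)) / 2))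
    (m : ℕ) :
    eps r m ≡
      ∑ a ∈ Finset.Nat.antidiagonalTuple 3 m,
        (Nat.multinomial Finset.univ a : ℤ) * eps b (a 2) *
          (eps g (a 0) * eps h (a 1) + eps g (a 0 + 1) * eps h (a 1) +
            eps g (a 0) * eps h (a 1 + 1)) [ZMOD 2] := by
  have hP : ∀ x, 2 * ((g (x + 1) * h x + g x * h (x + 1)) / 2)
      = g (x+1) * h x + g x * h (x+1) := by
    intro x
    refine Int.mul_ediv_cancel' ?_
    have h1 : (2:ℤ) ∣ g (x+1) - g x := by simpa [delta] using hg 1 x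
    have h2 : (2:ℤ) ∣ h (x+1) - h x := by simpa [delta] using hh 1 x
    have e : g (x+1) * h x + g x * h (x+1)
        = (g (x+1) - g x) * h x + (h (x+1) - h x) * g x + 2 * (g x * h x) := by ring
    rw [e]
    exact dvd_add (dvd_add (h1.mul_right _) (h2.mul_right _)) ⟨g x * h x, rfl⟩
  have key := r_cong b g h (fun x => (g (x + 1) * h x + g x * h (x + 1)) / 2)
    hb hg hh hP r hr m
  obtain ⟨u, hu⟩ := Int.modEq_iff_dvd.mp key
  set T := ∑ i ∈ Finset.range (m+1), (m.choose i : ℤ) * eps b i * Sgh g h (m-i) with hT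
  have hΔ : delta^[m] r 0 = 2^m * (T - 2*u) := by linear_combination -hu
  have heps : eps r m = (T - 2*u) % 2 := by
    rw [eps, hΔ, Int.mul_ediv_cancel_left _ (by positivity)]
  rw [heps, ← sum_identity b g h m, ← hT]
  have h1 : (T - 2*u) % 2 ≡ T - 2*u [ZMOD 2] := Int.emod_emod_of_dvd _ (dvd_refl 2)
  exact h1.trans (Int.modEq_iff_dvd.mpr ⟨u, by ring⟩)
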